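/- Let d ≥ 1 be an integer, σ ≥ 0, L ≥ 0, Δ ≥ 0, γ₀ > 0. Define η_t = (2/(t+2))^{2/3} and γ_t = γ₀·2/(t+2) for integers t ≥ 0. On a probability space, let (ê_t)_{t≥0}, (e_t)_{t≥1}, (S_t)_{t≥1} be square-integrable ℝ^d-valued random sequences such that: (i) ê_t = (1 − η_t)·ê_{t−1} + η_t·e_t + (1 − η_t)·S_t for all t ≥ 1; (ii) E[⟨e_s, e_t⟩] = 0 for all integers 1 ≤ s < t; (iii) E[‖e_t‖²] ≤ σ² for all t ≥ 1; (iv) E[‖ê_0‖] ≤ σ; (v) ‖S_t‖ ≤ L·γ_{t−1} + Δ almost surely for all t ≥ 1. Then there exist absolute constants C₁, C₂, C₃ > 0 (independent of all the above data) such that for every integer T ≥ 1: E[‖ê_T‖] ≤ C₁·σ·η_T^{1/2} + C₂·L·γ_T·η_T^{−1} + C₃·Δ·η_T^{−1}. -/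

import Mathlib

open MeasureTheory
open scoped RealInnerProductSpace

/-- The momentum parameter sequence `η_t = (2/(t+2))^{2/3}` of the N-MPG analysis. -/
noncomputable def etaNMPG (t : ℕ) : ℝ := (2 / ((t : ℝ) + 2)) ^ ((2 : ℝ) / 3)

/-- The step-size sequence `γ_t = γ₀ · 2/(t+2)` of the N-MPG analysis. -/
noncomputable def gammaNMPG (γ₀ : ℝ) (t : ℕ) : ℝ := γ₀ * (2 / ((t : ℝ) + 2))


lemma base_pos (t : ℕ) : (0:ℝ) < 2 / ((t : ℝ) + 2) := by positivity
lemma base_le_one (t : ℕ) : 2 / ((t : ℝ) + 2) ≤ 1 := by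
  rw [div_le_one (by positivity)]; norm_num

lemma eta_pos (t : ℕ) : 0 < etaNMPG t := Real.rpow_pos_of_pos (base_pos t) _

lemma eta_le_one (t : ℕ) : etaNMPG t ≤ 1 :=
  Real.rpow_le_one (base_pos t).le (base_le_one t) (by norm_num)

lemma eta_anti (t : ℕ) : etaNMPG (t+1) ≤ etaNMPG t := by
  apply Real.rpow_le_rpow (base_pos _).le _ (by norm_num)
  apply div_le_div_of_nonneg_left (by norm_num) (by positivity)
  push_cast; linarith

-- half bound: x/2 ≤ x^(2/3) for 0 < x ≤ 1
lemma half_le_rpow {x : ℝ} (hx : 0 < x) (hx1 : x ≤ 1) : x / 2 ≤ x ^ ((2:ℝ)/3) := by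
  have h1 : x ^ (1:ℝ) ≤ x ^ ((2:ℝ)/3) :=
    Real.rpow_le_rpow_of_exponent_ge hx hx1 (by norm_num)
  rw [Real.rpow_one] at h1
  linarith

lemma keyZ (t : ℕ) : (1 - etaNMPG (t+1)) * etaNMPG t ≤ etaNMPG (t+1) := by
  set x : ℝ := 2 / ((t:ℝ) + 2) with hxdef
  set y : ℝ := 2 / ((t:ℝ) + 1 + 2) with hydef
  have hx : 0 < x := base_pos t
  have hy : 0 < y := by rw [hydef]; positivity
  have hy1 : y ≤ 1 := by
    rw [hydef, div_le_one (by positivity)]; norm_num; positivity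
  have hxy : (1 - y/2) * x = y := by
    rw [hxdef, hydef]; field_simp; ring
  have h1 : 1 - etaNMPG (t+1) ≤ 1 - y/2 := by
    have : y/2 ≤ etaNMPG (t+1) := by
      have := half_le_rpow hy hy1
      simpa [etaNMPG, hydef] using this
    linarith
  have h2 : (1 - y/2) ≤ (1 - y/2) ^ ((2:ℝ)/3) := by
    have hb : 0 < 1 - y/2 := by linarith
    have := Real.rpow_le_rpow_of_exponent_ge hb (by linarith) (show (2:ℝ)/3 ≤ 1 by norm_num)
    rw [Real.rpow_one] at this
    exact this
  have hby : (0:ℝ) ≤ 1 - y/2 := by linarith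
  calc (1 - etaNMPG (t+1)) * etaNMPG t ≤ (1 - y/2) ^ ((2:ℝ)/3) * x ^ ((2:ℝ)/3) := by
        apply mul_le_mul (le_trans h1 h2) (le_refl _) (eta_pos t).le
        exact Real.rpow_nonneg hby _
    _ = ((1 - y/2) * x) ^ ((2:ℝ)/3) := (Real.mul_rpow hby hx.le).symm
    _ = etaNMPG (t+1) := by rw [hxy]; simp [etaNMPG, hydef]

lemma eta_one_half : (1:ℝ)/2 ≤ etaNMPG 1 := by
  have h1 : etaNMPG 1 = ((4/9 : ℝ)) ^ ((1:ℝ)/3) := by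
    have : etaNMPG 1 = (2/3 : ℝ) ^ ((2:ℝ)/3) := by norm_num [etaNMPG]
    rw [this, show ((2:ℝ)/3) = (2:ℝ) * (1/3) by norm_num, Real.rpow_mul (by norm_num)]
    norm_num
  have h2 : ((1:ℝ)/2) = ((1/8 : ℝ)) ^ ((1:ℝ)/3) := by
    rw [show (1/8:ℝ) = (1/2)^((3:ℕ):ℝ) by rw [Real.rpow_natCast]; norm_num,
      ← Real.rpow_mul (by norm_num)]
    norm_num
  rw [h1, h2]
  exact Real.rpow_le_rpow (by norm_num) (by norm_num) (by norm_num)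

lemma keyZ2 (t : ℕ) :
    (1 - etaNMPG (t+1))^2 * etaNMPG t + etaNMPG (t+1)^2 ≤ etaNMPG (t+1) := by
  have h := keyZ t
  have h1 : etaNMPG (t+1) ≤ 1 := eta_le_one _
  have h2 : 0 < etaNMPG (t+1) := eta_pos _
  have h3 : 0 < etaNMPG t := eta_pos _
  nlinarith [sq_nonneg (1 - etaNMPG (t+1))]

lemma keyP (t : ℕ) :
    (1 - etaNMPG (t+1)) * Real.sqrt (etaNMPG t) ≤ Real.sqrt (etaNMPG (t+1)) := by
  have h1 : (0:ℝ) ≤ 1 - etaNMPG (t+1) := by linarith [eta_le_one (t+1)]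
  have h2 : (1 - etaNMPG (t+1)) * Real.sqrt (etaNMPG t)
      = Real.sqrt ((1 - etaNMPG (t+1))^2 * etaNMPG t) := by
    rw [Real.sqrt_mul (sq_nonneg _), Real.sqrt_sq h1]
  rw [h2]
  apply Real.sqrt_le_sqrt
  nlinarith [keyZ2 t, sq_nonneg (etaNMPG (t+1))]

lemma keyY_Delta (t : ℕ) :
    (1 - etaNMPG (t+1)) * (2 / etaNMPG t) + 1 ≤ 2 / etaNMPG (t+1) := by
  have h1 : (0:ℝ) ≤ 1 - etaNMPG (t+1) := by linarith [eta_le_one (t+1)]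
  have h2 : 0 < etaNMPG (t+1) := eta_pos _
  have h3 : 0 < etaNMPG t := eta_pos _
  have h4 : 2 / etaNMPG t ≤ 2 / etaNMPG (t+1) :=
    div_le_div_of_nonneg_left (by norm_num) h2 (eta_anti t)
  have h5 : (1 - etaNMPG (t+1)) * (2 / etaNMPG t)
      ≤ (1 - etaNMPG (t+1)) * (2 / etaNMPG (t+1)) := by
    apply mul_le_mul_of_nonneg_left h4 h1
  have h6 : (1 - etaNMPG (t+1)) * (2 / etaNMPG (t+1)) = 2 / etaNMPG (t+1) - 2 := by
    field_simp
  linarith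

lemma poly_keyY {a b : ℝ} (ha : 0 < a) (hab : a ≤ b) (hb1 : b ≤ 1)
    (hb3le : b^3 ≤ 3/2*a^3) (hxyid : b^3 - a^3 = a^3*b^3/2) :
    4*b - 4*a^2*b + b^3 ≤ 4*a := by
  have hb : 0 < b := lt_of_lt_of_le ha hab
  have ha1 : a ≤ 1 := le_trans hab hb1
  have hba2 : b^2 ≤ 3/2 * a^2 := by nlinarith [pow_pos ha 3, pow_pos hb 2, pow_pos ha 2]
  have hdiff : b - a ≤ a^4 / 4 := by
    have hge : 3*a^2 ≤ b^2 + b*a + a^2 := by nlinarith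
    have hba : 0 ≤ b - a := by linarith
    have h1 : (b - a) * (3*a^2) ≤ a^3 * b^3 / 2 := by
      calc (b - a) * (3*a^2) ≤ (b - a) * (b^2 + b*a + a^2) :=
            mul_le_mul_of_nonneg_left hge hba
        _ = b^3 - a^3 := by ring
        _ = a^3 * b^3 / 2 := hxyid
    nlinarith [pow_pos ha 2, pow_pos ha 3]
  nlinarith [pow_pos ha 3, pow_pos ha 2, mul_le_mul_of_nonneg_left hab (sq_nonneg a)]

lemma keyY_L_core (t : ℕ) :
    (1 - etaNMPG (t+1)) * (4 * (2/((t:ℝ)+2)) / etaNMPG t) + 2/((t:ℝ)+2)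
      ≤ 4 * (2/((t:ℝ)+3)) / etaNMPG (t+1) := by
  set x : ℝ := 2 / ((t:ℝ) + 2) with hxdef
  set y : ℝ := 2 / ((t:ℝ) + 3) with hydef
  have hx : 0 < x := base_pos t
  have hy : 0 < y := by rw [hydef]; positivity
  have hyx : y ≤ x := by
    rw [hxdef, hydef]
    apply div_le_div_of_nonneg_left (by norm_num) (by positivity) (by linarith)
  have hx1 : x ≤ 1 := base_le_one t
  set b : ℝ := x ^ ((1:ℝ)/3) with hbdef
  set a : ℝ := y ^ ((1:ℝ)/3) with hadef
  have ha : 0 < a := Real.rpow_pos_of_pos hy _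
  have hb : 0 < b := Real.rpow_pos_of_pos hx _
  have hab : a ≤ b := Real.rpow_le_rpow hy.le hyx (by norm_num)
  have hb1 : b ≤ 1 := Real.rpow_le_one hx.le hx1 (by norm_num)
  have hcube : ∀ z : ℝ, 0 < z → (z ^ ((1:ℝ)/3))^(3:ℕ) = z := by
    intro z hz
    rw [← Real.rpow_natCast (z ^ ((1:ℝ)/3)) 3, ← Real.rpow_mul hz.le]
    norm_num
  have hb3 : b^(3:ℕ) = x := hcube x hx
  have ha3 : a^(3:ℕ) = y := hcube y hy
  have hetat : etaNMPG t = b^(2:ℕ) := by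
    rw [hbdef, ← Real.rpow_natCast (x ^ ((1:ℝ)/3)) 2, ← Real.rpow_mul hx.le]
    norm_num [etaNMPG, hxdef]
  have hetat1 : etaNMPG (t+1) = a^(2:ℕ) := by
    rw [hadef, ← Real.rpow_natCast (y ^ ((1:ℝ)/3)) 2, ← Real.rpow_mul hy.le]
    have hc : ((t+1 : ℕ):ℝ) + 2 = (t:ℝ) + 3 := by push_cast; ring
    simp only [etaNMPG, hc, hydef]
    norm_num
  -- x ≤ 3/2 * y
  have hx32 : x ≤ 3/2 * y := by
    have h0 : (0:ℝ) ≤ (t:ℝ) := Nat.cast_nonneg t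
    have h3 : (3:ℝ)/2 * (2/((t:ℝ)+3)) = 3/((t:ℝ)+3) := by ring
    rw [hxdef, hydef, h3, div_le_div_iff₀ (by positivity) (by positivity)]
    linarith
  have hb3le : b^(3:ℕ) ≤ 3/2 * a^(3:ℕ) := by rw [hb3, ha3]; exact hx32
  -- exact identity x - y = x*y/2
  have hxyid : b^(3:ℕ) - a^(3:ℕ) = a^(3:ℕ) * b^(3:ℕ) / 2 := by
    rw [hb3, ha3, hxdef, hydef]; field_simp; ring
  clear_value a b
  have hpoly : 4*b - 4*a^2*b + b^3 ≤ 4*a := poly_keyY ha hab hb1 hb3le hxyid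
  -- assemble
  have e1 : 4 * x / etaNMPG t = 4 * b := by
    rw [hetat, ← hb3]; field_simp
  have e2 : 4 * y / etaNMPG (t+1) = 4 * a := by
    rw [hetat1, ← ha3]; field_simp
  rw [e1, e2, hetat1, ← hb3]
  nlinarith [hpoly]

lemma eta_zero : etaNMPG 0 = 1 := by
  norm_num [etaNMPG]

section Seqs

variable {Ω : Type} {F : Type*} [NormedAddCommGroup F] [InnerProductSpace ℝ F]

noncomputable def Zseq (e : ℕ → Ω → F) : ℕ → Ω → F
  | 0 => fun _ => 0
  | (n+1) => fun ω => (1 - etaNMPG (n+1)) • Zseq e n ω + etaNMPG (n+1) • e (n+1) ω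

noncomputable def Yseq (S : ℕ → Ω → F) : ℕ → Ω → F
  | 0 => fun _ => 0
  | (n+1) => fun ω => (1 - etaNMPG (n+1)) • Yseq S n ω + (1 - etaNMPG (n+1)) • S (n+1) ω

noncomputable def pseq : ℕ → ℝ
  | 0 => 1
  | (n+1) => (1 - etaNMPG (n+1)) * pseq n

lemma pseq_nonneg : ∀ t, 0 ≤ pseq t
  | 0 => by norm_num [pseq]
  | (n+1) => by
      have := pseq_nonneg n
      have h := eta_le_one (n+1)
      simp only [pseq]
      nlinarith

lemma pseq_le_sqrt : ∀ t, pseq t ≤ Real.sqrt (etaNMPG t)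
  | 0 => by norm_num [pseq, eta_zero]
  | (n+1) => by
      have ih := pseq_le_sqrt n
      have h1 : (0:ℝ) ≤ 1 - etaNMPG (n+1) := by linarith [eta_le_one (n+1)]
      calc pseq (n+1) = (1 - etaNMPG (n+1)) * pseq n := rfl
        _ ≤ (1 - etaNMPG (n+1)) * Real.sqrt (etaNMPG n) := by
            exact mul_le_mul_of_nonneg_left ih h1
        _ ≤ Real.sqrt (etaNMPG (n+1)) := keyP n

lemma ehat_decomp (ehat e S : ℕ → Ω → F)
    (hrec : ∀ t : ℕ, 1 ≤ t → ∀ ω, ehat t ω =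
      (1 - etaNMPG t) • ehat (t - 1) ω + etaNMPG t • e t ω + (1 - etaNMPG t) • S t ω) :
    ∀ t ω, ehat t ω = pseq t • ehat 0 ω + Zseq e t ω + Yseq S t ω := by
  intro t
  induction t with
  | zero => intro ω; simp [pseq, Zseq, Yseq]
  | succ n ih =>
      intro ω
      have h := hrec (n+1) (Nat.le_add_left 1 n) ω
      simp only [Nat.add_sub_cancel] at h
      rw [h, ih ω]
      simp only [pseq, Zseq, Yseq]
      module

end Seqs

section Meas

variable {Ω : Type} [MeasurableSpace Ω] {P : Measure Ω}
variable {F : Type*} [NormedAddCommGroup F] [InnerProductSpace ℝ F]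

lemma memL2_inner_integrable {f g : Ω → F} (hf : MemLp f 2 P) (hg : MemLp g 2 P) :
    Integrable (fun ω => ⟪f ω, g ω⟫) P := by
  have h := L2.integrable_inner (𝕜 := ℝ) (hf.toLp f) (hg.toLp g)
  apply h.congr
  filter_upwards [hf.coeFn_toLp, hg.coeFn_toLp] with ω h1 h2
  rw [h1, h2]

lemma memL2_norm_sq_integrable {f : Ω → F} (hf : MemLp f 2 P) :
    Integrable (fun ω => ‖f ω‖^2) P := by
  have h := memL2_inner_integrable hf hf
  apply h.congr
  filter_upwards with ω
  rw [real_inner_self_eq_norm_sq]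

lemma Zseq_memL2 [IsFiniteMeasure P] (e : ℕ → Ω → F) (he : ∀ t, MemLp (e t) 2 P) :
    ∀ t, MemLp (Zseq e t) 2 P
  | 0 => by simpa [Zseq] using memLp_const (0 : F)
  | (n+1) => by
      have ih := Zseq_memL2 e he n
      exact (ih.const_smul _).add ((he (n+1)).const_smul _)

lemma Yseq_memL2 [IsFiniteMeasure P] (S : ℕ → Ω → F) (hS : ∀ t, MemLp (S t) 2 P) :
    ∀ t, MemLp (Yseq S t) 2 P
  | 0 => by simpa [Yseq] using memLp_const (0 : F)
  | (n+1) => by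
      have ih := Yseq_memL2 S hS n
      exact (ih.const_smul _).add ((hS (n+1)).const_smul _)

end Meas

section Meas2

variable {Ω : Type} [MeasurableSpace Ω] {P : Measure Ω}
variable {F : Type*} [NormedAddCommGroup F] [InnerProductSpace ℝ F]

lemma Zseq_orth [IsFiniteMeasure P] (e : ℕ → Ω → F) (he : ∀ t, MemLp (e t) 2 P)
    (horth : ∀ s t : ℕ, 1 ≤ s → s < t → ∫ ω, ⟪e s ω, e t ω⟫ ∂P = 0) :
    ∀ t u : ℕ, t < u → ∫ ω, ⟪Zseq e t ω, e u ω⟫ ∂P = 0 := by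
  intro t
  induction t with
  | zero => intro u _; simp [Zseq]
  | succ n ih =>
      intro u hu
      have h1 : n < u := Nat.lt_of_succ_lt hu
      have h2 : 1 ≤ n + 1 := Nat.le_add_left 1 n
      have hint1 : Integrable (fun ω => ⟪Zseq e n ω, e u ω⟫) P :=
        memL2_inner_integrable (Zseq_memL2 e he n) (he u)
      have hint2 : Integrable (fun ω => ⟪e (n+1) ω, e u ω⟫) P :=
        memL2_inner_integrable (he (n+1)) (he u)
      have heq : (fun ω => ⟪Zseq e (n+1) ω, e u ω⟫)
          = fun ω => (1 - etaNMPG (n+1)) * ⟪Zseq e n ω, e u ω⟫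
            + etaNMPG (n+1) * ⟪e (n+1) ω, e u ω⟫ := by
        funext ω
        simp [Zseq, inner_add_left, real_inner_smul_left]
      have hI1 : Integrable (fun ω => (1 - etaNMPG (n+1)) * ⟪Zseq e n ω, e u ω⟫) P :=
        hint1.const_mul _
      have hI2 : Integrable (fun ω => etaNMPG (n+1) * ⟪e (n+1) ω, e u ω⟫) P :=
        hint2.const_mul _
      rw [heq, integral_add hI1 hI2, integral_const_mul, integral_const_mul,
        ih u h1, horth (n+1) u h2 hu]
      ring

lemma Zseq_mom [IsProbabilityMeasure P] (e : ℕ → Ω → F) (he : ∀ t, MemLp (e t) 2 P)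
    (horth : ∀ s t : ℕ, 1 ≤ s → s < t → ∫ ω, ⟪e s ω, e t ω⟫ ∂P = 0)
    {σ : ℝ} (hσ : 0 ≤ σ) (hmom : ∀ t : ℕ, 1 ≤ t → ∫ ω, ‖e t ω‖ ^ 2 ∂P ≤ σ ^ 2) :
    ∀ t, ∫ ω, ‖Zseq e t ω‖^2 ∂P ≤ σ^2 * etaNMPG t := by
  intro t
  induction t with
  | zero => simp [Zseq, eta_zero]; positivity
  | succ n ih =>
      have hη1 : (0:ℝ) ≤ 1 - etaNMPG (n+1) := by linarith [eta_le_one (n+1)]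
      have hη2 : (0:ℝ) ≤ etaNMPG (n+1) := (eta_pos _).le
      have hZm := Zseq_memL2 e he n
      have hint1 : Integrable (fun ω => ‖Zseq e n ω‖^2) P := memL2_norm_sq_integrable hZm
      have hint2 : Integrable (fun ω => ⟪Zseq e n ω, e (n+1) ω⟫) P :=
        memL2_inner_integrable hZm (he (n+1))
      have hint3 : Integrable (fun ω => ‖e (n+1) ω‖^2) P :=
        memL2_norm_sq_integrable (he (n+1))
      have heq : (fun ω => ‖Zseq e (n+1) ω‖^2)
          = fun ω => (1 - etaNMPG (n+1))^2 * ‖Zseq e n ω‖^2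
            + (2 * ((1 - etaNMPG (n+1)) * etaNMPG (n+1))) * ⟪Zseq e n ω, e (n+1) ω⟫
            + (etaNMPG (n+1))^2 * ‖e (n+1) ω‖^2 := by
        funext ω
        have hns : ‖Zseq e (n+1) ω‖^2
            = ‖(1 - etaNMPG (n+1)) • Zseq e n ω‖^2
              + 2 * ⟪(1 - etaNMPG (n+1)) • Zseq e n ω, etaNMPG (n+1) • e (n+1) ω⟫
              + ‖etaNMPG (n+1) • e (n+1) ω‖^2 := by
          exact norm_add_sq_real _ _
        rw [hns, norm_smul, norm_smul, real_inner_smul_left, real_inner_smul_right,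
          Real.norm_eq_abs, Real.norm_eq_abs, abs_of_nonneg hη1, abs_of_nonneg hη2]
        ring
      have hI1 : Integrable (fun ω => (1 - etaNMPG (n+1))^2 * ‖Zseq e n ω‖^2) P :=
        hint1.const_mul _
      have hI2 : Integrable (fun ω =>
          (2 * ((1 - etaNMPG (n+1)) * etaNMPG (n+1))) * ⟪Zseq e n ω, e (n+1) ω⟫) P :=
        hint2.const_mul _
      have hI3 : Integrable (fun ω => (etaNMPG (n+1))^2 * ‖e (n+1) ω‖^2) P :=
        hint3.const_mul _
      have hI12 : Integrable (fun ω => (1 - etaNMPG (n+1))^2 * ‖Zseq e n ω‖^2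
          + (2 * ((1 - etaNMPG (n+1)) * etaNMPG (n+1))) * ⟪Zseq e n ω, e (n+1) ω⟫) P :=
        hI1.add hI2
      rw [heq, integral_add hI12 hI3, integral_add hI1 hI2,
        integral_const_mul, integral_const_mul, integral_const_mul,
        Zseq_orth e he horth n (n+1) (Nat.lt_succ_self n)]
      have hb := hmom (n+1) (Nat.le_add_left 1 n)
      have hkey := keyZ2 n
      have h2 : (1 - etaNMPG (n+1))^2 * ∫ ω, ‖Zseq e n ω‖^2 ∂P
          ≤ (1 - etaNMPG (n+1))^2 * (σ^2 * etaNMPG n) :=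
        mul_le_mul_of_nonneg_left ih (sq_nonneg _)
      have h3 : (etaNMPG (n+1))^2 * ∫ ω, ‖e (n+1) ω‖^2 ∂P
          ≤ (etaNMPG (n+1))^2 * σ^2 :=
        mul_le_mul_of_nonneg_left hb (sq_nonneg _)
      have hσ2 : (0:ℝ) ≤ σ^2 := sq_nonneg σ
      nlinarith [sq_nonneg (1 - etaNMPG (n+1)), sq_nonneg (etaNMPG (n+1))]

lemma int_norm_le_sqrt [IsProbabilityMeasure P] {f : Ω → F} (hf : MemLp f 2 P) :
    ∫ ω, ‖f ω‖ ∂P ≤ Real.sqrt (∫ ω, ‖f ω‖^2 ∂P) := by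
  have hpq : Real.HolderConjugate 2 2 := Real.HolderConjugate.two_two
  have hf2 : MemLp (fun ω => ‖f ω‖) (ENNReal.ofReal 2) P := by
    rw [show ENNReal.ofReal 2 = 2 by norm_num]
    exact hf.norm
  have hg2 : MemLp (fun _ : Ω => (1:ℝ)) (ENNReal.ofReal 2) P := memLp_const 1
  have h := integral_mul_le_Lp_mul_Lq_of_nonneg hpq
    (Filter.Eventually.of_forall (fun ω => norm_nonneg (f ω)))
    (Filter.Eventually.of_forall (fun _ => zero_le_one)) hf2 hg2
  simp only [mul_one, Real.one_rpow, integral_const, probReal_univ,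
    smul_eq_mul, one_mul] at h
  have hrw : ∫ ω, ‖f ω‖ ^ (2:ℝ) ∂P = ∫ ω, ‖f ω‖ ^ 2 ∂P := by
    apply integral_congr_ae
    filter_upwards with ω
    rw [← Real.rpow_natCast ‖f ω‖ 2]
    norm_num
  rw [hrw] at h
  rwa [Real.sqrt_eq_rpow]

end Meas2

lemma keyY_L (L γ₀ : ℝ) (hLγ : 0 ≤ L * γ₀) (t : ℕ) :
    (1 - etaNMPG (t+1)) * (L * gammaNMPG γ₀ t * (4 / etaNMPG t)) + L * gammaNMPG γ₀ t
      ≤ L * gammaNMPG γ₀ (t+1) * (4 / etaNMPG (t+1)) := by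
  have hc := keyY_L_core t
  have h := mul_le_mul_of_nonneg_left hc hLγ
  have e1 : L * γ₀ * ((1 - etaNMPG (t+1)) * (4 * (2/((t:ℝ)+2)) / etaNMPG t) + 2/((t:ℝ)+2))
      = (1 - etaNMPG (t+1)) * (L * gammaNMPG γ₀ t * (4 / etaNMPG t)) + L * gammaNMPG γ₀ t := by
    simp only [gammaNMPG]; ring
  have e2 : L * γ₀ * (4 * (2/((t:ℝ)+3)) / etaNMPG (t+1))
      = L * gammaNMPG γ₀ (t+1) * (4 / etaNMPG (t+1)) := by
    have hc2 : ((t+1 : ℕ):ℝ) + 2 = (t:ℝ) + 3 := by push_cast; ring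
    simp only [gammaNMPG, hc2]; ring
  rw [e1, e2] at h
  exact h

lemma keyY_D (Δ : ℝ) (hΔ : 0 ≤ Δ) (t : ℕ) :
    (1 - etaNMPG (t+1)) * (Δ * (2 / etaNMPG t)) + Δ
      ≤ Δ * (2 / etaNMPG (t+1)) := by
  have hc := keyY_Delta t
  have h := mul_le_mul_of_nonneg_left hc hΔ
  calc (1 - etaNMPG (t+1)) * (Δ * (2 / etaNMPG t)) + Δ
      = Δ * ((1 - etaNMPG (t+1)) * (2 / etaNMPG t) + 1) := by ring
    _ ≤ Δ * (2 / etaNMPG (t+1)) := h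

section Meas3

variable {Ω : Type} [MeasurableSpace Ω] {P : Measure Ω}
variable {F : Type*} [NormedAddCommGroup F] [InnerProductSpace ℝ F]

lemma Yseq_bound [IsProbabilityMeasure P] (S : ℕ → Ω → F) (hSm : ∀ t, MemLp (S t) 2 P)
    {L Δ γ₀ : ℝ} (hL : 0 ≤ L) (hΔ : 0 ≤ Δ) (hγ : 0 < γ₀)
    (hS : ∀ t : ℕ, 1 ≤ t → ∀ᵐ ω ∂P, ‖S t ω‖ ≤ L * gammaNMPG γ₀ (t - 1) + Δ) :
    ∀ t, ∫ ω, ‖Yseq S t ω‖ ∂P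
      ≤ L * gammaNMPG γ₀ t * (4 / etaNMPG t) + Δ * (2 / etaNMPG t) := by
  intro t
  induction t with
  | zero =>
      simp only [Yseq, norm_zero, integral_const, smul_eq_mul, mul_zero]
      have h1 : 0 < etaNMPG 0 := eta_pos 0
      have h2 : 0 ≤ gammaNMPG γ₀ 0 := by
        simp only [gammaNMPG]; positivity
      positivity
  | succ n ih =>
      have hη1 : (0:ℝ) ≤ 1 - etaNMPG (n+1) := by linarith [eta_le_one (n+1)]
      have hS1 := hS (n+1) (Nat.le_add_left 1 n)
      simp only [Nat.add_sub_cancel] at hS1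
      have hintY : Integrable (fun ω => ‖Yseq S n ω‖) P :=
        ((Yseq_memL2 S hSm n).integrable (by norm_num)).norm
      have hintY1 : Integrable (fun ω => ‖Yseq S (n+1) ω‖) P :=
        ((Yseq_memL2 S hSm (n+1)).integrable (by norm_num)).norm
      have hc : 0 ≤ L * gammaNMPG γ₀ n + Δ := by
        have : 0 ≤ gammaNMPG γ₀ n := by simp only [gammaNMPG]; positivity
        positivity
      have hmono : ∫ ω, ‖Yseq S (n+1) ω‖ ∂P
          ≤ ∫ ω, (1 - etaNMPG (n+1)) * ‖Yseq S n ω‖ + (L * gammaNMPG γ₀ n + Δ) ∂P := by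
        apply integral_mono_ae hintY1 ((hintY.const_mul _).add (integrable_const _))
        filter_upwards [hS1] with ω hω
        calc ‖Yseq S (n+1) ω‖
            ≤ ‖(1 - etaNMPG (n+1)) • Yseq S n ω‖ + ‖(1 - etaNMPG (n+1)) • S (n+1) ω‖ :=
              norm_add_le _ _
          _ = (1 - etaNMPG (n+1)) * ‖Yseq S n ω‖ + (1 - etaNMPG (n+1)) * ‖S (n+1) ω‖ := by
              rw [norm_smul, norm_smul, Real.norm_eq_abs, abs_of_nonneg hη1]
          _ ≤ (1 - etaNMPG (n+1)) * ‖Yseq S n ω‖ + (L * gammaNMPG γ₀ n + Δ) := by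
              have h1 : (1 - etaNMPG (n+1)) * ‖S (n+1) ω‖ ≤ 1 * (L * gammaNMPG γ₀ n + Δ) :=
                mul_le_mul (by linarith [eta_pos (n+1)]) hω (norm_nonneg _) zero_le_one
              linarith
      have hsplit : ∫ ω, (1 - etaNMPG (n+1)) * ‖Yseq S n ω‖ + (L * gammaNMPG γ₀ n + Δ) ∂P
          = (1 - etaNMPG (n+1)) * ∫ ω, ‖Yseq S n ω‖ ∂P + (L * gammaNMPG γ₀ n + Δ) := by
        rw [integral_add (hintY.const_mul _) (integrable_const _), integral_const_mul,
          integral_const, probReal_univ, one_smul]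
      have hih : (1 - etaNMPG (n+1)) * ∫ ω, ‖Yseq S n ω‖ ∂P
          ≤ (1 - etaNMPG (n+1)) * (L * gammaNMPG γ₀ n * (4 / etaNMPG n) + Δ * (2 / etaNMPG n)) :=
        mul_le_mul_of_nonneg_left ih hη1
      have hk1 := keyY_L L γ₀ (by positivity) n
      have hk2 := keyY_D Δ hΔ n
      rw [hsplit] at hmono
      calc ∫ ω, ‖Yseq S (n+1) ω‖ ∂P
          ≤ (1 - etaNMPG (n+1)) * ∫ ω, ‖Yseq S n ω‖ ∂P + (L * gammaNMPG γ₀ n + Δ) := hmono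
        _ ≤ (1 - etaNMPG (n+1)) * (L * gammaNMPG γ₀ n * (4 / etaNMPG n) + Δ * (2 / etaNMPG n))
              + (L * gammaNMPG γ₀ n + Δ) := by linarith
        _ ≤ L * gammaNMPG γ₀ (n+1) * (4 / etaNMPG (n+1)) + Δ * (2 / etaNMPG (n+1)) := by
            nlinarith [hk1, hk2]

end Meas3

/-- error bound for the N-MPG momentum estimator, abstract form.
There are absolute constants `C₁, C₂, C₃ > 0` such that for any data satisfying the momentum
error recursion `ê_t = (1-η_t) ê_{t-1} + η_t e_t + (1-η_t) S_t` with pairwise uncorrelated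
noises `e_t` of second moment at most `σ²`, `E‖ê_0‖ ≤ σ` and drift bound
`‖S_t‖ ≤ L γ_{t-1} + Δ` a.s., one has for all `T ≥ 1`,
`E‖ê_T‖ ≤ C₁ σ η_T^{1/2} + C₂ L γ_T η_T⁻¹ + C₃ Δ η_T⁻¹`. -/
theorem stmt_13 :
    ∃ C₁ > (0 : ℝ), ∃ C₂ > (0 : ℝ), ∃ C₃ > (0 : ℝ),
      ∀ (d : ℕ), 1 ≤ d →
      ∀ (σ L Δ γ₀ : ℝ), 0 ≤ σ → 0 ≤ L → 0 ≤ Δ → 0 < γ₀ →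
      ∀ (Ω : Type) [MeasurableSpace Ω] (P : Measure Ω) [IsProbabilityMeasure P]
        (ehat e S : ℕ → Ω → EuclideanSpace ℝ (Fin d)),
        (∀ t, MemLp (ehat t) 2 P) →
        (∀ t, MemLp (e t) 2 P) →
        (∀ t, MemLp (S t) 2 P) →
        (∀ t : ℕ, 1 ≤ t → ∀ ω, ehat t ω =
          (1 - etaNMPG t) • ehat (t - 1) ω + etaNMPG t • e t ω + (1 - etaNMPG t) • S t ω) →
        (∀ s t : ℕ, 1 ≤ s → s < t → ∫ ω, ⟪e s ω, e t ω⟫ ∂P = 0) →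
        (∀ t : ℕ, 1 ≤ t → ∫ ω, ‖e t ω‖ ^ 2 ∂P ≤ σ ^ 2) →
        (∫ ω, ‖ehat 0 ω‖ ∂P ≤ σ) →
        (∀ t : ℕ, 1 ≤ t → ∀ᵐ ω ∂P, ‖S t ω‖ ≤ L * gammaNMPG γ₀ (t - 1) + Δ) →
        ∀ T : ℕ, 1 ≤ T →
          ∫ ω, ‖ehat T ω‖ ∂P ≤
            C₁ * σ * (etaNMPG T) ^ ((1 : ℝ) / 2)
              + C₂ * L * gammaNMPG γ₀ T * (etaNMPG T)⁻¹
              + C₃ * Δ * (etaNMPG T)⁻¹ := by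
  refine ⟨2, by norm_num, 4, by norm_num, 4, by norm_num, ?_⟩
  intro d hd σ L Δ γ₀ hσ hL hΔ hγ Ω _ P _ ehat e S hehat he hSm hrec horth hmom h0 hS T hT
  have hdec := ehat_decomp ehat e S hrec
  -- integrability pieces
  have hIA : Integrable (fun ω => pseq T * ‖ehat 0 ω‖) P :=
    (((hehat 0).integrable (by norm_num)).norm).const_mul _
  have hIZ : Integrable (fun ω => ‖Zseq e T ω‖) P :=
    ((Zseq_memL2 e he T).integrable (by norm_num)).norm
  have hIY : Integrable (fun ω => ‖Yseq S T ω‖) P :=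
    ((Yseq_memL2 S hSm T).integrable (by norm_num)).norm
  have hIT : Integrable (fun ω => ‖ehat T ω‖) P :=
    ((hehat T).integrable (by norm_num)).norm
  have hps := pseq_nonneg T
  -- step 1: triangle inequality
  have step1 : ∫ ω, ‖ehat T ω‖ ∂P
      ≤ ∫ ω, (pseq T * ‖ehat 0 ω‖ + ‖Zseq e T ω‖ + ‖Yseq S T ω‖) ∂P := by
    apply integral_mono hIT ((hIA.add hIZ).add hIY)
    intro ω
    simp only [Pi.add_apply]
    rw [hdec T ω]
    calc ‖pseq T • ehat 0 ω + Zseq e T ω + Yseq S T ω‖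
        ≤ ‖pseq T • ehat 0 ω‖ + ‖Zseq e T ω‖ + ‖Yseq S T ω‖ :=
          norm_add₃_le
      _ = pseq T * ‖ehat 0 ω‖ + ‖Zseq e T ω‖ + ‖Yseq S T ω‖ := by
          rw [norm_smul, Real.norm_eq_abs, abs_of_nonneg hps]
  have step2 : ∫ ω, (pseq T * ‖ehat 0 ω‖ + ‖Zseq e T ω‖ + ‖Yseq S T ω‖) ∂P
      = pseq T * ∫ ω, ‖ehat 0 ω‖ ∂P + ∫ ω, ‖Zseq e T ω‖ ∂P + ∫ ω, ‖Yseq S T ω‖ ∂P := by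
    have hIAZ : Integrable (fun ω => pseq T * ‖ehat 0 ω‖ + ‖Zseq e T ω‖) P := hIA.add hIZ
    rw [integral_add hIAZ hIY, integral_add hIA hIZ, integral_const_mul]
  -- bounds
  have b1 : pseq T * ∫ ω, ‖ehat 0 ω‖ ∂P ≤ Real.sqrt (etaNMPG T) * σ :=
    mul_le_mul (pseq_le_sqrt T) h0 (integral_nonneg fun ω => norm_nonneg _)
      (Real.sqrt_nonneg _)
  have b2 : ∫ ω, ‖Zseq e T ω‖ ∂P ≤ σ * Real.sqrt (etaNMPG T) := by
    calc ∫ ω, ‖Zseq e T ω‖ ∂P ≤ Real.sqrt (∫ ω, ‖Zseq e T ω‖^2 ∂P) :=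
          int_norm_le_sqrt (Zseq_memL2 e he T)
      _ ≤ Real.sqrt (σ^2 * etaNMPG T) :=
          Real.sqrt_le_sqrt (Zseq_mom e he horth hσ hmom T)
      _ = σ * Real.sqrt (etaNMPG T) := by
          rw [Real.sqrt_mul (sq_nonneg σ), Real.sqrt_sq hσ]
  have b3 := Yseq_bound S hSm hL hΔ hγ hS T
  -- finish
  have hη : 0 < etaNMPG T := eta_pos T
  have hγT : 0 ≤ gammaNMPG γ₀ T := by simp only [gammaNMPG]; positivity
  have hsqrt : Real.sqrt (etaNMPG T) = (etaNMPG T) ^ ((1:ℝ)/2) := Real.sqrt_eq_rpow _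
  have hd1 : L * gammaNMPG γ₀ T * (4 / etaNMPG T) = 4 * L * gammaNMPG γ₀ T * (etaNMPG T)⁻¹ := by
    field_simp
  have hd2 : Δ * (2 / etaNMPG T) ≤ 4 * Δ * (etaNMPG T)⁻¹ := by
    rw [div_eq_mul_inv]
    have h1 : 0 ≤ Δ * (etaNMPG T)⁻¹ := by positivity
    nlinarith
  calc ∫ ω, ‖ehat T ω‖ ∂P
      ≤ pseq T * ∫ ω, ‖ehat 0 ω‖ ∂P + ∫ ω, ‖Zseq e T ω‖ ∂P + ∫ ω, ‖Yseq S T ω‖ ∂P := by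
        rw [← step2]; exact step1
    _ ≤ Real.sqrt (etaNMPG T) * σ + σ * Real.sqrt (etaNMPG T)
          + (L * gammaNMPG γ₀ T * (4 / etaNMPG T) + Δ * (2 / etaNMPG T)) := by
        linarith
    _ ≤ 2 * σ * (etaNMPG T) ^ ((1:ℝ)/2) + 4 * L * gammaNMPG γ₀ T * (etaNMPG T)⁻¹
          + 4 * Δ * (etaNMPG T)⁻¹ := by
        rw [← hsqrt, ← hd1]
        linarith
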